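/- Let f₁ and f₂ be functions of the form f(ξ, η) = ∑_{j=1}^n p_j(ξ, η) e^{2πi x_j ξ}, where n ≤ N, the frequencies x_j ∈ [0,1) are pairwise distinct, and the p_j ∈ ℂ[ξ, η] are nonzero polynomials in which every variable appears with exponent < D. If f₁(m, l) = f₂(m, l) for all (m, l) ∈ {0, 1, …, 2ND} × {0, 1, …, D}, then f₁(ξ, η) = f₂(ξ, η) for all (ξ, η) ∈ ℝ². -/

import Mathlib

open Polynomial

lemma lc_taylor_one (p : ℂ[X]) : (taylor 1 p).coeff p.natDegree = p.leadingCoeff := by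
  rw [taylor_coeff]
  have h : hasseDeriv p.natDegree p = C p.leadingCoeff := by
    ext m
    rw [hasseDeriv_coeff, coeff_C]
    cases m with
    | zero =>
        rw [if_pos rfl, Nat.zero_add, Nat.choose_self, Nat.cast_one, one_mul, leadingCoeff]
    | succ m =>
        rw [if_neg (by omega),
          coeff_eq_zero_of_natDegree_lt (by omega : p.natDegree < m + 1 + p.natDegree), mul_zero]
  rw [h, eval_C]

lemma degree_taylor_one (p : ℂ[X]) : (taylor 1 p).degree = p.degree := by
  rcases eq_or_ne p 0 with rfl | hp
  · simp
  · have h0 : taylor 1 p ≠ 0 := fun h => hp (by simpa using taylor_injective 1 (by simpa using h))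
    rw [degree_eq_natDegree hp, degree_eq_natDegree h0, natDegree_taylor]

-- the shift operator A c z p = z • taylor 1 p - c • p
noncomputable def Aop (c z : ℂ) (p : ℂ[X]) : ℂ[X] := z • taylor 1 p - c • p

lemma Aop_natDegree_le (c z : ℂ) (p : ℂ[X]) : (Aop c z p).natDegree ≤ p.natDegree := by
  refine le_trans (natDegree_sub_le _ _) (max_le ?_ ?_)
  · exact le_trans (natDegree_smul_le _ _) (le_of_eq (natDegree_taylor p 1))
  · exact natDegree_smul_le _ _

lemma Aop_iter_natDegree_le (c z : ℂ) (t : ℕ) (p : ℂ[X]) :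
    ((Aop c z)^[t] p).natDegree ≤ p.natDegree := by
  induction t generalizing p with
  | zero => simp
  | succ t ih =>
      rw [Function.iterate_succ_apply]
      exact le_trans (ih _) (Aop_natDegree_le c z p)

lemma Aop_eval (c z : ℂ) (p : ℂ[X]) (m : ℕ) :
    (Aop c z p).eval (m : ℂ) = z * p.eval ((m + 1 : ℕ) : ℂ) - c * p.eval (m : ℂ) := by
  simp only [Aop, eval_sub, eval_smul, taylor_eval, smul_eq_mul]
  push_cast
  ring

lemma Aop_self_iter_zero (c : ℂ) : ∀ (t : ℕ) (p : ℂ[X]), p.degree < (t : ℕ) →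
    (Aop c c)^[t] p = 0 := by
  intro t
  induction t with
  | zero =>
      intro p hp
      have h0 : p.degree < 0 := by exact_mod_cast hp
      simpa using degree_eq_bot.mp (Nat.WithBot.lt_zero_iff.mp h0)
  | succ t ih =>
      intro p hp
      rw [Function.iterate_succ_apply]
      apply ih
      rcases eq_or_ne p 0 with rfl | hp0
      · simp [Aop]
      · have ht0 : taylor 1 p ≠ 0 :=
          fun h => hp0 (by simpa using taylor_injective 1 (by simpa using h))
        have hlt : (Aop c c p).degree < p.degree := by
          have heq : Aop c c p = c • (taylor 1 p - p) := by rw [Aop, smul_sub]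
          rw [heq]
          refine lt_of_le_of_lt (degree_smul_le _ _) ?_
          have := degree_sub_lt (degree_taylor_one p) ht0
            (by rw [leadingCoeff, natDegree_taylor, lc_taylor_one])
          rwa [degree_taylor_one] at this
        have hnd : p.natDegree ≤ t := by
          have := (degree_eq_natDegree hp0) ▸ hp
          exact_mod_cast Nat.lt_succ_iff.mp (by exact_mod_cast this)
        calc (Aop c c p).degree < p.degree := hlt
          _ = (p.natDegree : WithBot ℕ) := degree_eq_natDegree hp0
          _ ≤ (t : ℕ) := by exact_mod_cast hnd

lemma Aop_inj (c z : ℂ) (hz : z ≠ c) (p : ℂ[X]) (h : Aop c z p = 0) : p = 0 := by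
  by_contra hp
  have hc : (Aop c z p).coeff p.natDegree = (z - c) * p.leadingCoeff := by
    rw [Aop, coeff_sub, coeff_smul, coeff_smul, lc_taylor_one, smul_eq_mul, smul_eq_mul,
      coeff_natDegree]
    ring
  rw [h, coeff_zero] at hc
  rcases mul_eq_zero.mp hc.symm with hc' | hc'
  · exact hz (sub_eq_zero.mp hc')
  · exact hp (leadingCoeff_eq_zero.mp hc')

lemma Aop_iter_inj (c z : ℂ) (hz : z ≠ c) (t : ℕ) (p : ℂ[X])
    (h : (Aop c z)^[t] p = 0) : p = 0 := by
  induction t generalizing p with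
  | zero => simpa using h
  | succ t ih =>
      rw [Function.iterate_succ_apply] at h
      exact Aop_inj c z hz p (ih _ h)

lemma keyA {ι : Type} [DecidableEq ι] (D : ℕ) (hD : 0 < D) :
    ∀ (n : ℕ) (s : Finset ι), s.card = n → ∀ (z : ι → ℂ), (∀ j ∈ s, z j ≠ 0) →
    Set.InjOn z s → ∀ (r : ι → ℂ[X]), (∀ j ∈ s, (r j).natDegree < D) →
    ∀ (M : ℕ), s.card * D ≤ M + 1 →
    (∀ m : ℕ, m ≤ M → ∑ j ∈ s, (r j).eval (m : ℂ) * z j ^ m = 0) →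
    ∀ j ∈ s, r j = 0 := by
  intro n
  induction n with
  | zero =>
      intro s hs z _ _ r _ M _ _ j hj
      exact absurd hj (by simp [Finset.card_eq_zero.mp hs])
  | succ n ih =>
      intro s hcard z hz hinj r hdeg M hM hvan
      have hsne : s.Nonempty := Finset.card_pos.mp (by omega)
      obtain ⟨j₀, hj₀⟩ := hsne
      set c := z j₀ with hc
      -- the iterated-difference vanishing claim
      have claim : ∀ (t : ℕ) (m : ℕ), m + t ≤ M →
          ∑ j ∈ s, ((Aop c (z j))^[t] (r j)).eval (m : ℂ) * z j ^ m = 0 := by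
        intro t
        induction t with
        | zero => intro m hm; simpa using hvan m (by omega)
        | succ t iht =>
            intro m hm
            have h1 := iht (m + 1) (by omega)
            have h2 := iht m (by omega)
            calc ∑ j ∈ s, ((Aop c (z j))^[t+1] (r j)).eval (m : ℂ) * z j ^ m
                = ∑ j ∈ s, (((Aop c (z j))^[t] (r j)).eval ((m+1 : ℕ) : ℂ) * z j ^ (m+1)
                    - c * (((Aop c (z j))^[t] (r j)).eval (m : ℂ) * z j ^ m)) := by
                  refine Finset.sum_congr rfl fun j hj => ?_
                  rw [Function.iterate_succ_apply', Aop_eval]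
                  ring
              _ = (∑ j ∈ s, ((Aop c (z j))^[t] (r j)).eval ((m+1 : ℕ) : ℂ) * z j ^ (m+1))
                    - c * ∑ j ∈ s, ((Aop c (z j))^[t] (r j)).eval (m : ℂ) * z j ^ m := by
                  rw [Finset.sum_sub_distrib, Finset.mul_sum]
              _ = 0 := by rw [h1, h2]; ring
      have hDM : D ≤ M + 1 := le_trans (by nlinarith) hM
      -- the j₀ term dies after D applications
      have hj0zero : (Aop c c)^[D] (r j₀) = 0 := by
        apply Aop_self_iter_zero
        calc (r j₀).degree ≤ ((r j₀).natDegree : WithBot ℕ) := degree_le_natDegree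
          _ < (D : ℕ) := by exact_mod_cast hdeg j₀ hj₀
      -- vanishing on the erased set
      have hvan' : ∀ m : ℕ, m ≤ M - D →
          ∑ j ∈ s.erase j₀, ((Aop c (z j))^[D] (r j)).eval (m : ℂ) * z j ^ m = 0 := by
        intro m hm
        rcases Finset.eq_empty_or_nonempty (s.erase j₀) with he | he
        · simp [he]
        · have hcarde : (s.erase j₀).card = n := by
            rw [Finset.card_erase_of_mem hj₀, hcard]
            omega
          have hn1 : 1 ≤ n := by
            have := Finset.card_pos.mpr he
            omega
          have h2D : 2 * D ≤ M + 1 := by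
            calc 2 * D ≤ (n + 1) * D := by nlinarith
              _ ≤ M + 1 := by rw [← hcard]; exact hM
          have hmD : m + D ≤ M := by omega
          have := claim D m hmD
          rwa [← Finset.add_sum_erase s _ hj₀, hj0zero, eval_zero, zero_mul, zero_add] at this
      -- apply induction hypothesis
      have herase : ∀ j ∈ s.erase j₀, (Aop c (z j))^[D] (r j) = 0 := by
        refine ih (s.erase j₀) (by rw [Finset.card_erase_of_mem hj₀, hcard]; omega) z
          (fun j hj => hz j (Finset.mem_of_mem_erase hj))
          (hinj.mono (Finset.coe_subset.mpr (Finset.erase_subset _ _)))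
          _ (fun j hj => lt_of_le_of_lt (Aop_iter_natDegree_le _ _ _ _)
            (hdeg j (Finset.mem_of_mem_erase hj)))
          (M - D) ?_ hvan'
        have h1 : s.card * D = n * D + D := by rw [hcard]; ring
        have h2 : n * D + D ≤ M + 1 := by rw [← h1]; exact hM
        have h3 : (s.erase j₀).card = n := by rw [Finset.card_erase_of_mem hj₀, hcard]; omega
        rw [h3]
        omega
      have hr_erase : ∀ j ∈ s.erase j₀, r j = 0 := by
        intro j hj
        have hne : z j ≠ c := fun h =>
          (Finset.ne_of_mem_erase hj) (hinj (Finset.mem_coe.mpr (Finset.mem_of_mem_erase hj))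
            (Finset.mem_coe.mpr hj₀) h)
        exact Aop_iter_inj c (z j) hne D (r j) (herase j hj)
      -- now conclude r j₀ = 0
      have hj0 : r j₀ = 0 := by
        have heval : ∀ m : ℕ, m ≤ M → (r j₀).eval (m : ℂ) = 0 := by
          intro m hm
          have := hvan m hm
          rw [← Finset.add_sum_erase s _ hj₀,
            Finset.sum_eq_zero (fun j hj => by rw [hr_erase j hj, eval_zero, zero_mul]),
            add_zero] at this
          exact (mul_eq_zero.mp this).resolve_right (pow_ne_zero m (hz j₀ hj₀))
        apply eq_zero_of_degree_lt_of_eval_index_eq_zero (v := (Nat.cast : ℕ → ℂ))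
          (Finset.range (M + 1)) (fun a _ b _ h => Nat.cast_injective h)
        · rw [Finset.card_range]
          calc (r j₀).degree ≤ ((r j₀).natDegree : WithBot ℕ) := degree_le_natDegree
            _ < ((M+1 : ℕ) : WithBot ℕ) := by
              exact_mod_cast lt_of_lt_of_le (hdeg j₀ hj₀) hDM
        · intro i hi
          exact heval i (by simpa using Nat.lt_succ_iff.mp (Finset.mem_range.mp hi))
      intro j hj
      rcases eq_or_ne j j₀ with rfl | hne
      · exact hj0
      · exact hr_erase j (Finset.mem_erase.mpr ⟨hne, hj⟩)

open MvPolynomial in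
lemma natDegree_aeval_le (i : Fin 2) (v : Fin 2 → ℂ[X])
    (hv : ∀ j, (v j).natDegree ≤ if j = i then 1 else 0) (p : MvPolynomial (Fin 2) ℂ) :
    (MvPolynomial.aeval v p).natDegree ≤ p.degreeOf i := by
  rw [MvPolynomial.aeval_def, MvPolynomial.eval₂_eq']
  apply natDegree_sum_le_of_forall_le
  intro d hd
  have hdi : d i ≤ p.degreeOf i := by
    rw [MvPolynomial.degreeOf_eq_sup]
    exact Finset.le_sup (f := fun d => d i) hd
  calc (algebraMap ℂ ℂ[X] (MvPolynomial.coeff d p) * ∏ j, v j ^ d j).natDegree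
      ≤ (algebraMap ℂ ℂ[X] (MvPolynomial.coeff d p)).natDegree + (∏ j, v j ^ d j).natDegree :=
        natDegree_mul_le
    _ ≤ 0 + (∏ j, v j ^ d j).natDegree := by
        simp [Polynomial.natDegree_C]
    _ ≤ ∑ j, (v j ^ d j).natDegree := by
        rw [zero_add]; exact natDegree_prod_le _ _
    _ ≤ ∑ j, d j * (v j).natDegree := Finset.sum_le_sum (fun j _ => natDegree_pow_le)
    _ ≤ d i := by
        rw [Fin.sum_univ_two]
        have h0 := hv 0
        have h1 := hv 1
        fin_cases i <;> simp at h0 h1 ⊢ <;> simp only [h0, h1, mul_zero, zero_add, add_zero] <;>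
          [exact le_trans (Nat.mul_le_mul_left (d 0) h0) (by omega);
           exact le_trans (Nat.mul_le_mul_left (d 1) h1) (by omega)]
    _ ≤ p.degreeOf i := hdi

lemma eval_aeval (q : MvPolynomial (Fin 2) ℂ) (v : Fin 2 → ℂ[X]) (t : ℂ) :
    (MvPolynomial.aeval v q).eval t = MvPolynomial.eval (fun i => (v i).eval t) q := by
  rw [MvPolynomial.aeval_def, MvPolynomial.eval₂_eq', MvPolynomial.eval_eq']
  rw [Polynomial.eval_finset_sum]
  refine Finset.sum_congr rfl fun d hd => ?_
  rw [eval_mul, Polynomial.eval_prod]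
  simp

lemma exp_two_pi_inj {x y : ℝ} (hx : x ∈ Set.Ico (0:ℝ) 1) (hy : y ∈ Set.Ico (0:ℝ) 1)
    (h : Complex.exp (2 * Real.pi * Complex.I * x) = Complex.exp (2 * Real.pi * Complex.I * y)) :
    x = y := by
  rw [Complex.exp_eq_exp_iff_exists_int] at h
  obtain ⟨k, hk⟩ := h
  have hne : (2 * (Real.pi : ℂ) * Complex.I) ≠ 0 := by
    simp [Real.pi_ne_zero, Complex.I_ne_zero]
  have h3 : (2 * (Real.pi : ℂ) * Complex.I) * ((x : ℂ) - y - k) = 0 := by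
    linear_combination hk
  have h4 : (x : ℂ) - y - k = 0 := by
    rcases mul_eq_zero.mp h3 with h | h
    · exact absurd h hne
    · exact h
  have h5 : x - y - (k : ℝ) = 0 := by exact_mod_cast h4
  have h6 : ((k : ℝ) : ℝ) = x - y := by linarith
  have hk1 : (k : ℝ) < 1 := by
    rw [h6]
    rcases hx with ⟨hx0, hx1⟩; rcases hy with ⟨hy0, hy1⟩
    linarith
  have hk2 : (-1 : ℝ) < k := by
    rw [h6]
    rcases hx with ⟨hx0, hx1⟩; rcases hy with ⟨hy0, hy1⟩
    linarith
  have hk0 : k = 0 := by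
    have a1 : k < 1 := by exact_mod_cast hk1
    have a2 : (-1 : ℤ) < k := by exact_mod_cast hk2
    omega
  rw [hk0] at h6
  push_cast at h6
  linarith

/-- Two bivariate exponential polynomials whose frequencies occur in the first
variable only — `f(ξ,η) = ∑_{j=1}^n p_j(ξ,η) e^{2πi x_j ξ}` with `n ≤ N`, pairwise distinct
`x_j ∈ [0,1)` and nonzero coefficients `p_j ∈ ℂ[ξ,η]` in which every variable appears with
exponent `< D` — that agree on the sampling grid `{0,…,2ND} × {0,…,D}` agree on all of `ℝ²`. -/
theorem unifreq_exp_poly_unique (N D : ℕ) (hN : 0 < N) (hD : 0 < D)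
    (f₁ f₂ : ℝ → ℝ → ℂ) (n₁ n₂ : ℕ) (hn₁ : n₁ ≤ N) (hn₂ : n₂ ≤ N)
    (x₁ : Fin n₁ → ℝ) (x₂ : Fin n₂ → ℝ)
    (p₁ : Fin n₁ → MvPolynomial (Fin 2) ℂ) (p₂ : Fin n₂ → MvPolynomial (Fin 2) ℂ)
    (hx₁ : ∀ j, x₁ j ∈ Set.Ico (0 : ℝ) 1) (hx₂ : ∀ j, x₂ j ∈ Set.Ico (0 : ℝ) 1)
    (hinj₁ : Function.Injective x₁) (hinj₂ : Function.Injective x₂)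
    (hp₁ : ∀ j, p₁ j ≠ 0) (hp₂ : ∀ j, p₂ j ≠ 0)
    (hd₁ : ∀ j, ∀ i : Fin 2, (p₁ j).degreeOf i < D)
    (hd₂ : ∀ j, ∀ i : Fin 2, (p₂ j).degreeOf i < D)
    (hf₁ : ∀ ξ η : ℝ, f₁ ξ η = ∑ j, MvPolynomial.eval ![(ξ : ℂ), (η : ℂ)] (p₁ j) *
      Complex.exp (2 * Real.pi * Complex.I * (x₁ j) * ξ))
    (hf₂ : ∀ ξ η : ℝ, f₂ ξ η = ∑ j, MvPolynomial.eval ![(ξ : ℂ), (η : ℂ)] (p₂ j) *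
      Complex.exp (2 * Real.pi * Complex.I * (x₂ j) * ξ))
    (hsamp : ∀ m l : ℕ, m ≤ 2 * N * D → l ≤ D → f₁ (m : ℝ) (l : ℝ) = f₂ (m : ℝ) (l : ℝ)) :
    ∀ ξ η : ℝ, f₁ ξ η = f₂ ξ η := by
  classical
  set T : Finset ℝ := Finset.image x₁ Finset.univ ∪ Finset.image x₂ Finset.univ with hT
  set q : ℝ → MvPolynomial (Fin 2) ℂ := fun x =>
    (∑ j ∈ Finset.univ.filter (fun j => x₁ j = x), p₁ j) -
    ∑ j ∈ Finset.univ.filter (fun j => x₂ j = x), p₂ j with hq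
  have hmemT₁ : ∀ j, x₁ j ∈ T :=
    fun j => Finset.mem_union_left _ (Finset.mem_image_of_mem _ (Finset.mem_univ j))
  have hmemT₂ : ∀ j, x₂ j ∈ T :=
    fun j => Finset.mem_union_right _ (Finset.mem_image_of_mem _ (Finset.mem_univ j))
  have hTmem : ∀ x ∈ T, x ∈ Set.Ico (0:ℝ) 1 := by
    intro x hx
    rcases Finset.mem_union.mp hx with h | h <;>
      obtain ⟨j, _, rfl⟩ := Finset.mem_image.mp h
    · exact hx₁ j
    · exact hx₂ j
  -- expansion of the difference
  have hsum : ∀ a b : ℝ, f₁ a b - f₂ a b =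
      ∑ x ∈ T, MvPolynomial.eval ![(a:ℂ),(b:ℂ)] (q x) *
        Complex.exp (2 * Real.pi * Complex.I * x * a) := by
    intro a b
    have e₁ : ∑ j, MvPolynomial.eval ![(a:ℂ),(b:ℂ)] (p₁ j) *
        Complex.exp (2 * Real.pi * Complex.I * (x₁ j) * a) =
        ∑ x ∈ T, ∑ j ∈ Finset.univ.filter (fun j => x₁ j = x),
          MvPolynomial.eval ![(a:ℂ),(b:ℂ)] (p₁ j) *
            Complex.exp (2 * Real.pi * Complex.I * x * a) := by
      rw [← Finset.sum_fiberwise_of_maps_to (fun j _ => hmemT₁ j)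
        (fun j => MvPolynomial.eval ![(a:ℂ),(b:ℂ)] (p₁ j) *
          Complex.exp (2 * Real.pi * Complex.I * (x₁ j) * a))]
      exact Finset.sum_congr rfl fun x _ => Finset.sum_congr rfl fun j hj => by
        rw [(Finset.mem_filter.mp hj).2]
    have e₂ : ∑ j, MvPolynomial.eval ![(a:ℂ),(b:ℂ)] (p₂ j) *
        Complex.exp (2 * Real.pi * Complex.I * (x₂ j) * a) =
        ∑ x ∈ T, ∑ j ∈ Finset.univ.filter (fun j => x₂ j = x),
          MvPolynomial.eval ![(a:ℂ),(b:ℂ)] (p₂ j) *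
            Complex.exp (2 * Real.pi * Complex.I * x * a) := by
      rw [← Finset.sum_fiberwise_of_maps_to (fun j _ => hmemT₂ j)
        (fun j => MvPolynomial.eval ![(a:ℂ),(b:ℂ)] (p₂ j) *
          Complex.exp (2 * Real.pi * Complex.I * (x₂ j) * a))]
      exact Finset.sum_congr rfl fun x _ => Finset.sum_congr rfl fun j hj => by
        rw [(Finset.mem_filter.mp hj).2]
    rw [hf₁, hf₂, e₁, e₂, ← Finset.sum_sub_distrib]
    refine Finset.sum_congr rfl fun x _ => ?_
    rw [hq]
    rw [map_sub, map_sum, map_sum, sub_mul, Finset.sum_mul, Finset.sum_mul]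
  -- degree bound for q
  have hqdeg : ∀ (x : ℝ) (i : Fin 2), (q x).degreeOf i < D := by
    intro x i
    rw [MvPolynomial.degreeOf_lt_iff hD]
    intro d hd
    by_contra hge
    push_neg at hge
    have hc1 : ∀ j : Fin n₁, MvPolynomial.coeff d (p₁ j) = 0 := by
      intro j
      rw [← MvPolynomial.notMem_support_iff]
      intro hmem
      exact absurd (((MvPolynomial.degreeOf_lt_iff hD).mp (hd₁ j i)) d hmem) (by omega)
    have hc2 : ∀ j : Fin n₂, MvPolynomial.coeff d (p₂ j) = 0 := by
      intro j
      rw [← MvPolynomial.notMem_support_iff]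
      intro hmem
      exact absurd (((MvPolynomial.degreeOf_lt_iff hD).mp (hd₂ j i)) d hmem) (by omega)
    have : MvPolynomial.coeff d (q x) = 0 := by
      rw [hq]
      simp only [MvPolynomial.coeff_sub, MvPolynomial.coeff_sum]
      rw [Finset.sum_eq_zero (fun j _ => hc1 j), Finset.sum_eq_zero (fun j _ => hc2 j), sub_zero]
    exact (MvPolynomial.mem_support_iff.mp hd) this
  -- cardinality bound
  have hTcard : T.card * D ≤ 2 * N * D + 1 := by
    have h1 : T.card ≤ n₁ + n₂ :=
      le_trans (Finset.card_union_le _ _)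
        (add_le_add (le_trans (Finset.card_image_le) (by simp))
          (le_trans (Finset.card_image_le) (by simp)))
    have h2 : T.card ≤ 2 * N := by omega
    calc T.card * D ≤ 2 * N * D := Nat.mul_le_mul_right D h2
      _ ≤ 2 * N * D + 1 := by omega
  -- the sampled grid equations per l
  have hgrid : ∀ l : ℕ, l ≤ D → ∀ m : ℕ, m ≤ 2*N*D →
      ∑ x ∈ T, (Polynomial.eval (m:ℂ)
        (MvPolynomial.aeval ![Polynomial.X, Polynomial.C (l:ℂ)] (q x))) *
        (Complex.exp (2 * Real.pi * Complex.I * x))^m = 0 := by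
    intro l hl m hm
    have h0 := hsum (m : ℝ) (l : ℝ)
    rw [hsamp m l hm hl, sub_self] at h0
    calc ∑ x ∈ T, (Polynomial.eval (m:ℂ)
          (MvPolynomial.aeval ![Polynomial.X, Polynomial.C (l:ℂ)] (q x))) *
          (Complex.exp (2 * Real.pi * Complex.I * x))^m
        = ∑ x ∈ T, MvPolynomial.eval ![((m:ℝ):ℂ),((l:ℝ):ℂ)] (q x) *
            Complex.exp (2 * Real.pi * Complex.I * x * (m:ℝ)) := by
          refine Finset.sum_congr rfl fun x _ => ?_
          rw [eval_aeval]
          have hv : (fun i => Polynomial.eval (m:ℂ) (![Polynomial.X, Polynomial.C (l:ℂ)] i)) =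
              ![((m:ℝ):ℂ), ((l:ℝ):ℂ)] := by
            funext i; fin_cases i <;> simp
          rw [hv]
          congr 1
          rw [← Complex.exp_nat_mul]
          congr 1
          push_cast
          ring
      _ = 0 := h0.symm
  -- apply the key lemma for each l
  have hq0 : ∀ x ∈ T, ∀ l : ℕ, l ≤ D →
      MvPolynomial.aeval ![Polynomial.X, Polynomial.C (l:ℂ)] (q x) = 0 := by
    intro x hx l hl
    refine keyA D hD T.card T rfl (fun y => Complex.exp (2 * Real.pi * Complex.I * y))
      (fun y _ => Complex.exp_ne_zero _) ?_
      (fun y => MvPolynomial.aeval ![Polynomial.X, Polynomial.C (l:ℂ)] (q y)) ?_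
      (2*N*D) hTcard (fun m hm => hgrid l hl m hm) x hx
    · intro a ha b hb h
      exact exp_two_pi_inj (hTmem a ha) (hTmem b hb) h
    · intro y _
      refine lt_of_le_of_lt (natDegree_aeval_le 0 _ ?_ (q y)) (hqdeg y 0)
      intro j
      fin_cases j <;> simp
  -- conclude q x evaluates to zero everywhere
  have hqeval : ∀ x ∈ T, ∀ a b : ℂ, MvPolynomial.eval ![a,b] (q x) = 0 := by
    intro x hx a b
    have hcomm : ∀ (c : ℂ) (t : ℂ), Polynomial.eval t
        (MvPolynomial.aeval ![Polynomial.C c, Polynomial.X] (q x)) =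
        MvPolynomial.eval ![c, t] (q x) := by
      intro c t
      rw [eval_aeval]
      have hv : (fun i => Polynomial.eval t (![Polynomial.C c, Polynomial.X] i)) = ![c, t] := by
        funext i; fin_cases i <;> simp
      rw [hv]
    have hcomm' : ∀ (c : ℂ) (t : ℂ), Polynomial.eval t
        (MvPolynomial.aeval ![Polynomial.X, Polynomial.C c] (q x)) =
        MvPolynomial.eval ![t, c] (q x) := by
      intro c t
      rw [eval_aeval]
      have hv : (fun i => Polynomial.eval t (![Polynomial.X, Polynomial.C c] i)) = ![t, c] := by
        funext i; fin_cases i <;> simp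
      rw [hv]
    have hu : MvPolynomial.aeval ![Polynomial.C a, Polynomial.X] (q x) = 0 := by
      apply Polynomial.eq_zero_of_degree_lt_of_eval_index_eq_zero
        (v := (Nat.cast : ℕ → ℂ)) (Finset.range (D+1)) (fun i _ j _ h => Nat.cast_injective h)
      · rw [Finset.card_range]
        have hnd : (MvPolynomial.aeval ![Polynomial.C a, Polynomial.X] (q x)).natDegree < D := by
          refine lt_of_le_of_lt (natDegree_aeval_le 1 _ ?_ (q x)) (hqdeg x 1)
          intro j
          fin_cases j <;> simp
        calc (MvPolynomial.aeval ![Polynomial.C a, Polynomial.X] (q x)).degree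
            ≤ ((MvPolynomial.aeval ![Polynomial.C a, Polynomial.X] (q x)).natDegree : WithBot ℕ) :=
              Polynomial.degree_le_natDegree
          _ < ((D+1 : ℕ) : WithBot ℕ) := by exact_mod_cast Nat.lt_succ_of_lt hnd
      · intro l hl
        rw [hcomm, ← hcomm' (l:ℂ) a, hq0 x hx l (Nat.lt_succ_iff.mp (Finset.mem_range.mp hl)),
          Polynomial.eval_zero]
    rw [← hcomm a b, hu, Polynomial.eval_zero]
  -- final conclusion
  intro ξ η
  have h := hsum ξ η
  rw [Finset.sum_eq_zero (fun x hx => by rw [hqeval x hx, zero_mul])] at h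
  exact sub_eq_zero.mp h
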